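/- Let (U_n)_{n≥1} be a real-valued stationary and ergodic process with E U_1 = 0 and Prob{U_1 ≠ 0} > 0, and define the random walk W_n := Σ_{k=1}^n U_k. Then Prob{W_n > 0 infinitely often} > 0 and Prob{W_n ≥ 0 infinitely often} = 1. -/

import Mathlib

open MeasureTheory Filter Set Topology Classical
open scoped ENNReal NNReal

noncomputable section

/-- `-log t` as a value in `ℝ≥0∞` (equal to `∞` when `t = 0`); intended for `t ≤ 1`. -/
def negLog (t : ℝ≥0∞) : ℝ≥0∞ :=
  if t = 0 then ∞ else ENNReal.ofReal (-Real.log t.toReal)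

/-- `log t` as a value in `ℝ≥0∞` (equal to `∞` when `t = ∞`); intended for `t ≥ 1`. -/
def posLog (t : ℝ≥0∞) : ℝ≥0∞ :=
  if t = ∞ then ∞ else ENNReal.ofReal (Real.log t.toReal)

/-- The extended-real-valued logarithm of an `ℝ≥0∞` number. -/
def eLog (t : ℝ≥0∞) : EReal :=
  if t = 0 then ⊥ else if t = ∞ then ⊤ else ((Real.log t.toReal : ℝ) : EReal)

/-- Relative entropy `H(μ‖ν)` (in nats), valued in `ℝ≥0∞`: it equals
`∫ log (dμ/dν) dμ` when `μ ≪ ν` (and `+∞` when this integral is not defined,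
which for probability measures can only mean `+∞`), and `+∞` when `¬ μ ≪ ν`. -/
def relEnt {α : Type*} [MeasurableSpace α] (μ ν : Measure α) : ℝ≥0∞ :=
  if μ ≪ ν ∧ Integrable (llr μ ν) μ then ENNReal.ofReal (∫ x, llr μ ν x ∂μ) else ∞

/-- The set `W(P,D)` of couplings: probability measures on `S × T` with first
marginal `P` and expected distortion at most `D`. -/
def distSet {S T : Type*} [MeasurableSpace S] [MeasurableSpace T]
    (ρ : S × T → ℝ) (P : Measure S) (D : ℝ) : Set (Measure (S × T)) :=
  {W | IsProbabilityMeasure W ∧ W.map Prod.fst = P ∧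
    ((∫⁻ z, ENNReal.ofReal (ρ z) ∂W : ℝ≥0∞) : EReal) ≤ ((D : ℝ) : EReal)}

/-- The rate function `R(P,Q,D) = inf_{W ∈ W(P,D)} H(W‖P×Q)` (equal to `+∞`
when `W(P,D)` is empty). -/
def Rrate {S T : Type*} [MeasurableSpace S] [MeasurableSpace T]
    (ρ : S × T → ℝ) (P : Measure S) (Q : Measure T) (D : ℝ) : ℝ≥0∞ :=
  ⨅ W ∈ distSet ρ P D, relEnt W (P.prod Q)

/-- `Λ(P,Q,λ) = E_X[log E_Y e^{λρ(X,Y)}]`, valued in `EReal`.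
For `λ ≥ 0` the integrand lies in `[0,∞]`; for `λ < 0` it lies in `[-∞,0]`. -/
def Lam {S T : Type*} [MeasurableSpace S] [MeasurableSpace T]
    (ρ : S × T → ℝ) (P : Measure S) (Q : Measure T) (l : ℝ) : EReal :=
  if 0 ≤ l then
    ((∫⁻ x, posLog (∫⁻ y, ENNReal.ofReal (Real.exp (l * ρ (x, y))) ∂Q) ∂P : ℝ≥0∞) : EReal)
  else
    -(((∫⁻ x, negLog (∫⁻ y, ENNReal.ofReal (Real.exp (l * ρ (x, y))) ∂Q) ∂P : ℝ≥0∞) : EReal))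

/-- The Fenchel–Legendre transform `Λ*(P,Q,D) = sup_{λ ≤ 0} [λD - Λ(P,Q,λ)]`. -/
def LamStar {S T : Type*} [MeasurableSpace S] [MeasurableSpace T]
    (ρ : S × T → ℝ) (P : Measure S) (Q : Measure T) (D : ℝ) : EReal :=
  ⨆ l ∈ Iic (0 : ℝ), (((l * D : ℝ) : EReal) - Lam ρ P Q l)

/-- `ρ_Q(x) := essinf_{Y ∼ Q} ρ(x,Y)`. -/
def rhoQ {S T : Type*} [MeasurableSpace T]
    (ρ : S × T → ℝ) (Q : Measure T) (x : S) : ℝ :=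
  essInf (fun y => ρ (x, y)) Q

/-- `D_min(P,Q) := inf {D : Λ*(P,Q,D) < ∞}`. -/
def DminPQ {S T : Type*} [MeasurableSpace S] [MeasurableSpace T]
    (ρ : S × T → ℝ) (P : Measure S) (Q : Measure T) : ℝ :=
  sInf {D : ℝ | LamStar ρ P Q D ≠ ⊤}

/-- `D_ave(P,Q) := E ρ(X,Y)` for independent `X ∼ P`, `Y ∼ Q`, valued in `ℝ≥0∞`. -/
def DavePQ {S T : Type*} [MeasurableSpace S] [MeasurableSpace T]
    (ρ : S × T → ℝ) (P : Measure S) (Q : Measure T) : ℝ≥0∞ :=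
  ∫⁻ z, ENNReal.ofReal (ρ z) ∂(P.prod Q)

/-- The candidate derivative `Λ'(λ)` of `Λ(P,Q,·)`. -/
def LamD {S T : Type*} [MeasurableSpace S] [MeasurableSpace T]
    (ρ : S × T → ℝ) (P : Measure S) (Q : Measure T) (l : ℝ) : ℝ :=
  ∫ x, (∫ y, ρ (x, y) * Real.exp (l * ρ (x, y)) ∂Q) /
    (∫ y, Real.exp (l * ρ (x, y)) ∂Q) ∂P

/-- The left shift on sequences. -/
def shiftSeq {α : Type*} (x : ℕ → α) (n : ℕ) : α := x (n + 1)

/-- The single-letter distortion measure `ρ_n` on `n`-strings. -/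
def rhoFin {S T : Type*} (ρ : S × T → ℝ) (n : ℕ) (x : Fin n → S) (y : Fin n → T) : ℝ :=
  (n : ℝ)⁻¹ * ∑ k, ρ (x k, y k)

/-- `L_n(x_1^n, Q^n, D) = -(1/n) log Q^n(B_n(x_1^n,D))`, valued in `ℝ≥0∞`,
for a memoryless (product) codebook distribution `Q^n`. -/
def LnIID {S T : Type*} [MeasurableSpace T]
    (ρ : S × T → ℝ) (Q : Measure T) (D : ℝ) (n : ℕ) (x : ℕ → S) : ℝ≥0∞ :=
  (n : ℝ≥0∞)⁻¹ *
    negLog ((Measure.pi fun _ : Fin n => Q) {y | rhoFin ρ n (fun k => x k) y ≤ D})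

/-- The empirical distribution `P_{x_1^n} = (1/n) ∑_{k=1}^n δ_{x_k}`. -/
def empMeas {S : Type*} [MeasurableSpace S] (n : ℕ) (x : ℕ → S) : Measure S :=
  (n : ℝ≥0∞)⁻¹ • ∑ k ∈ Finset.range n, Measure.dirac (x k)

/-- The `n`-dimensional marginal of a measure on sequences. -/
def margN {α : Type*} [MeasurableSpace α] (μ : Measure (ℕ → α)) (n : ℕ) :
    Measure (Fin n → α) :=
  μ.map fun x (k : Fin n) => x (k : ℕ)

/-- The strong mixing condition `C⁻¹ 𝒬(A) 𝒬(B) ≤ 𝒬(A ∩ B) ≤ C 𝒬(A) 𝒬(B)` for all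
`A ∈ σ(Y_1^n)`, `B ∈ σ(Y_{n+1}^∞)` and all `n`. -/
def Mixing {T : Type*} [MeasurableSpace T] (𝒬 : Measure (ℕ → T)) (C : ℝ) : Prop :=
  ∀ (n : ℕ) (A B : Set (ℕ → T)),
    MeasurableSet[MeasurableSpace.comap (fun y (k : Fin n) => y (k : ℕ)) inferInstance] A →
    MeasurableSet[MeasurableSpace.comap (fun y (k : ℕ) => y (k + n)) inferInstance] B →
    (ENNReal.ofReal C)⁻¹ * (𝒬 A * 𝒬 B) ≤ 𝒬 (A ∩ B) ∧
      𝒬 (A ∩ B) ≤ ENNReal.ofReal C * (𝒬 A * 𝒬 B)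

/-- `L_n(x_1^n, Q_n, D) = -(1/n) log Q_n(B_n(x_1^n,D))` where `Q_n` is the
`n`-dimensional marginal of the codebook process law `𝒬`. -/
def LnMem {S T : Type*} [MeasurableSpace T]
    (ρ : S × T → ℝ) (𝒬 : Measure (ℕ → T)) (D : ℝ) (n : ℕ) (x : ℕ → S) : ℝ≥0∞ :=
  (n : ℝ≥0∞)⁻¹ * negLog (margN 𝒬 n {y | rhoFin ρ n (fun k => x k) y ≤ D})

/-- The set `W_n(P_n,D)` of couplings on `S^n × T^n`. -/
def distSetN {S T : Type*} [MeasurableSpace S] [MeasurableSpace T]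
    (ρ : S × T → ℝ) (n : ℕ) (Pn : Measure (Fin n → S)) (D : ℝ) :
    Set (Measure ((Fin n → S) × (Fin n → T))) :=
  {W | IsProbabilityMeasure W ∧ W.map Prod.fst = Pn ∧
    ((∫⁻ z, ENNReal.ofReal (rhoFin ρ n z.1 z.2) ∂W : ℝ≥0∞) : EReal) ≤ ((D : ℝ) : EReal)}

/-- `R_n(P_n,Q_n,D) = (1/n) inf_{W_n ∈ W_n(P_n,D)} H(W_n‖P_n×Q_n)`. -/
def RnMem {S T : Type*} [MeasurableSpace S] [MeasurableSpace T]
    (ρ : S × T → ℝ) (n : ℕ) (Pn : Measure (Fin n → S)) (Qn : Measure (Fin n → T))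
    (D : ℝ) : ℝ≥0∞ :=
  (n : ℝ≥0∞)⁻¹ * ⨅ W ∈ distSetN ρ n Pn D, relEnt W (Pn.prod Qn)

/-- `Λ_n(P_n,Q_n,λ) = E_{X_1^n}[log E_{Y_1^n} e^{λ ρ_n(X_1^n,Y_1^n)}]`. -/
def LamN {S T : Type*} [MeasurableSpace S] [MeasurableSpace T]
    (ρ : S × T → ℝ) (n : ℕ) (Pn : Measure (Fin n → S)) (Qn : Measure (Fin n → T))
    (l : ℝ) : EReal :=
  Lam (fun z => rhoFin ρ n z.1 z.2) Pn Qn l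

/-- `Λ_n*(P_n,Q_n,D) = (1/n) sup_{λ ≤ 0} [λD - Λ_n(P_n,Q_n,λ)]`. -/
def LamStarN {S T : Type*} [MeasurableSpace S] [MeasurableSpace T]
    (ρ : S × T → ℝ) (n : ℕ) (Pn : Measure (Fin n → S)) (Qn : Measure (Fin n → T))
    (D : ℝ) : EReal :=
  (((n : ℝ)⁻¹ : ℝ) : EReal) *
    ⨆ l ∈ Iic (0 : ℝ), (((l * D : ℝ) : EReal) - LamN ρ n Pn Qn l)

/-- One-sided Fenchel–Legendre transform `D ↦ sup_{λ ≤ 0} [λD - Λ(λ)]` of a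
function `Λ : ℝ → EReal`. -/
def FLT (L : ℝ → EReal) (D : ℝ) : EReal :=
  ⨆ l ∈ Iic (0 : ℝ), (((l * D : ℝ) : EReal) - L l)

namespace Stmt19Aux

def Wsum (n : ℕ) (ω : ℕ → ℝ) : ℝ := ∑ k ∈ Finset.range n, ω k

lemma measurable_shiftSeq : Measurable (shiftSeq : (ℕ → ℝ) → ℕ → ℝ) :=
  measurable_pi_lambda _ fun k => measurable_pi_apply (k + 1)

lemma measurable_Wsum (n : ℕ) : Measurable (Wsum n) :=
  Finset.measurable_sum _ fun k _ => measurable_pi_apply k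

lemma Wsum_zero (ω : ℕ → ℝ) : Wsum 0 ω = 0 := Finset.sum_range_zero _

lemma Wsum_succ_shift (n : ℕ) (ω : ℕ → ℝ) :
    Wsum (n + 1) ω = ω 0 + Wsum n (shiftSeq ω) := by
  unfold Wsum
  rw [Finset.sum_range_succ']
  simp only [shiftSeq]
  exact add_comm _ _

lemma Wsum_succ (n : ℕ) (ω : ℕ → ℝ) : Wsum (n + 1) ω = Wsum n ω + ω n := by
  unfold Wsum; rw [Finset.sum_range_succ]

lemma shiftSeq_iterate (n : ℕ) (ω : ℕ → ℝ) (k : ℕ) : (shiftSeq^[n] ω) k = ω (k + n) := by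
  induction n generalizing ω k with
  | zero => rfl
  | succ n ih =>
    rw [Function.iterate_succ_apply, ih]
    rfl

def Mennr (ω : ℕ → ℝ) : ℝ≥0∞ := ⨆ n, ENNReal.ofReal (Wsum n ω)

def Mfun (ω : ℕ → ℝ) : ℝ := (Mennr ω).toReal

lemma measurable_Mennr : Measurable Mennr :=
  Measurable.iSup fun n => (measurable_Wsum n).ennreal_ofReal

lemma measurable_Mfun : Measurable Mfun := measurable_Mennr.ennreal_toReal

lemma Mfun_nonneg (ω : ℕ → ℝ) : 0 ≤ Mfun ω := ENNReal.toReal_nonneg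

def Bset : Set (ℕ → ℝ) := {ω | BddAbove (Set.range fun n => Wsum n ω)}

lemma mem_Bset_iff (ω : ℕ → ℝ) : ω ∈ Bset ↔ Mennr ω ≠ ∞ := by
  constructor
  · rintro ⟨c, hc⟩
    have : Mennr ω ≤ ENNReal.ofReal c :=
      iSup_le fun n => ENNReal.ofReal_le_ofReal (hc ⟨n, rfl⟩)
    exact (this.trans_lt ENNReal.ofReal_lt_top).ne
  · intro h
    refine ⟨max 0 (Mennr ω).toReal, ?_⟩
    rintro x ⟨n, rfl⟩
    rcases le_or_gt (Wsum n ω) 0 with h1 | h1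
    · exact h1.trans (le_max_left _ _)
    · have h2 : ENNReal.ofReal (Wsum n ω) ≤ Mennr ω :=
        le_iSup (fun n => ENNReal.ofReal (Wsum n ω)) n
      have h3 : (ENNReal.ofReal (Wsum n ω)).toReal ≤ (Mennr ω).toReal :=
        ENNReal.toReal_mono h h2
      rw [ENNReal.toReal_ofReal h1.le] at h3
      exact h3.trans (le_max_right _ _)

lemma shift_mem_Bset {ω : ℕ → ℝ} : shiftSeq ω ∈ Bset ↔ ω ∈ Bset := by
  constructor
  · rintro ⟨c, hc⟩
    refine ⟨max 0 (ω 0 + c), ?_⟩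
    rintro x ⟨n, rfl⟩
    show Wsum n ω ≤ _
    cases n with
    | zero => rw [Wsum_zero]; exact le_max_left _ _
    | succ n =>
      rw [Wsum_succ_shift]
      exact le_trans (add_le_add_right (hc ⟨n, rfl⟩) _) (le_max_right _ _)
  · rintro ⟨c, hc⟩
    refine ⟨c - ω 0, ?_⟩
    rintro x ⟨n, rfl⟩
    show Wsum n (shiftSeq ω) ≤ _
    have h1 : Wsum (n + 1) ω ≤ c := hc ⟨n + 1, rfl⟩
    rw [Wsum_succ_shift] at h1
    linarith

lemma Bset_preimage : shiftSeq ⁻¹' Bset = Bset := Set.ext fun _ => shift_mem_Bset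

lemma measurableSet_Bset : MeasurableSet Bset := by
  have h : Bset = Mennr ⁻¹' {∞}ᶜ := Set.ext fun ω => by
    simp [mem_Bset_iff]
  rw [h]
  exact measurable_Mennr (measurableSet_singleton _).compl

lemma Mfun_eq_ciSup {ω : ℕ → ℝ} (hω : ω ∈ Bset) : Mfun ω = ⨆ n, Wsum n ω := by
  have hnn : 0 ≤ ⨆ n, Wsum n ω := le_ciSup_of_le hω 0 (le_of_eq (Wsum_zero ω).symm)
  have key : Mennr ω = ENNReal.ofReal (⨆ n, Wsum n ω) := by
    apply le_antisymm
    · exact iSup_le fun n => ENNReal.ofReal_le_ofReal (le_ciSup hω n)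
    · refine ENNReal.le_of_forall_pos_le_add fun ε hε _ => ?_
      have hεR : (0 : ℝ) < ε := hε
      have hlt : (⨆ n, Wsum n ω) - ε < ⨆ n, Wsum n ω := by linarith
      obtain ⟨n, hn⟩ := exists_lt_of_lt_ciSup hlt
      calc ENNReal.ofReal (⨆ n, Wsum n ω)
          ≤ ENNReal.ofReal (Wsum n ω + ε) := ENNReal.ofReal_le_ofReal (by linarith)
        _ ≤ ENNReal.ofReal (Wsum n ω) + ENNReal.ofReal ε := ENNReal.ofReal_add_le
        _ ≤ Mennr ω + ε := by
            refine add_le_add (le_iSup (fun n => ENNReal.ofReal (Wsum n ω)) n) ?_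
            rw [ENNReal.ofReal_coe_nnreal]
  rw [Mfun, key, ENNReal.toReal_ofReal hnn]

lemma Mfun_rec {ω : ℕ → ℝ} (hω : ω ∈ Bset) :
    Mfun ω = max 0 (ω 0 + Mfun (shiftSeq ω)) := by
  have hsω : shiftSeq ω ∈ Bset := shift_mem_Bset.mpr hω
  rw [Mfun_eq_ciSup hω, Mfun_eq_ciSup hsω]
  apply le_antisymm
  · refine ciSup_le fun n => ?_
    cases n with
    | zero => rw [Wsum_zero]; exact le_max_left _ _
    | succ n =>
      rw [Wsum_succ_shift]
      exact le_trans (add_le_add_right (le_ciSup hsω n) _) (le_max_right _ _)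
  · refine max_le ?_ ?_
    · have h1 := le_ciSup hω 0
      rwa [Wsum_zero] at h1
    · rw [← le_sub_iff_add_le']
      refine ciSup_le fun n => ?_
      have h1 := le_ciSup hω (n + 1)
      rw [Wsum_succ_shift] at h1
      linarith

lemma aux_min (a b c : ℝ) : min (a - b) 0 ≤ min a c - min b c := by
  simp only [min_def]
  split_ifs <;> linarith

lemma prob_eq_one_of_ae (Psrc : Measure (ℕ → ℝ)) [IsProbabilityMeasure Psrc]
    {S : Set (ℕ → ℝ)} (h : ∀ᵐ ω ∂Psrc, ω ∈ S) : Psrc S = 1 := by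
  have h2 : Psrc Sᶜ = 0 := by
    have := ae_iff.mp h
    simpa [Set.compl_def] using this
  calc Psrc S = Psrc Set.univ := measure_congr (ae_eq_univ.2 h2)
    _ = 1 := measure_univ

lemma visit (Psrc : Measure (ℕ → ℝ)) [IsProbabilityMeasure Psrc]
    (hErg : Ergodic shiftSeq Psrc) {A : Set (ℕ → ℝ)} (hA : MeasurableSet A)
    (hpos : 0 < Psrc A) :
    ∀ᵐ ω ∂Psrc, ∃ᶠ n in atTop, shiftSeq^[n] ω ∈ A := by
  set V := {ω : ℕ → ℝ | ∃ᶠ n in atTop, shiftSeq^[n] ω ∈ A} with hV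
  have hVmeas : MeasurableSet V := by
    have h : V = ⋂ N, ⋃ n, ⋃ _h : N ≤ n, shiftSeq^[n] ⁻¹' A := by
      ext ω
      simp [hV, Filter.frequently_atTop, Set.mem_iInter, Set.mem_iUnion]
    rw [h]
    exact MeasurableSet.iInter fun N => MeasurableSet.iUnion fun n =>
      MeasurableSet.iUnion fun _ => (measurable_shiftSeq.iterate n) hA
  have hVinv : shiftSeq ⁻¹' V = V := by
    ext ω
    simp only [Set.mem_preimage, hV, Set.mem_setOf_eq]
    constructor
    · intro h
      rw [Filter.frequently_atTop] at h ⊢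
      intro N
      obtain ⟨n, hn, hmem⟩ := h N
      refine ⟨n + 1, le_trans hn (Nat.le_succ n), ?_⟩
      rwa [Function.iterate_succ_apply]
    · intro h
      rw [Filter.frequently_atTop] at h ⊢
      intro N
      obtain ⟨n, hn, hmem⟩ := h (N + 1)
      refine ⟨n - 1, by omega, ?_⟩
      rw [← Function.iterate_succ_apply]
      have hn1 : (n - 1).succ = n := by omega
      rwa [hn1]
  rcases hErg.ae_empty_or_univ hVmeas hVinv with h | h
  · exfalso
    have h0 : Psrc V = 0 := by
      rw [measure_congr h]; simp
    have h1 : ∀ᵐ ω ∂Psrc, ω ∈ A → ω ∈ V :=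
      hErg.toMeasurePreserving.conservative.ae_mem_imp_frequently_image_mem
        hA.nullMeasurableSet
    have h2 : Psrc A ≤ Psrc V := measure_mono_ae h1
    exact absurd h0 (hpos.trans_le h2).ne'
  · have h2 : Psrc Vᶜ = 0 := ae_eq_univ.mp h
    rw [ae_iff]
    simpa [hV, Set.compl_def] using h2

lemma star (Psrc : Measure (ℕ → ℝ)) [IsProbabilityMeasure Psrc]
    (hErg : Ergodic shiftSeq Psrc) :
    ∀ᵐ ω ∂Psrc, ∃ᶠ n in atTop, Mfun (shiftSeq^[n] ω) ≤ Mfun ω := by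
  classical
  set Aq : ℚ → Set (ℕ → ℝ) := fun q => {ω | Mfun ω ≤ (q : ℝ)} with hAq
  have hAqmeas : ∀ q, MeasurableSet (Aq q) := fun q =>
    measurable_Mfun measurableSet_Iic
  set S : Set ℝ := {t : ℝ | 0 < Psrc {ω | Mfun ω ≤ t}} with hS
  have hSne : S.Nonempty := by
    by_contra hemp
    have hall : ∀ t : ℝ, Psrc {ω | Mfun ω ≤ t} = 0 := by
      intro t
      by_contra h0
      exact hemp ⟨t, zero_le.lt_of_ne (Ne.symm h0)⟩
    have hcover : (Set.univ : Set (ℕ → ℝ)) ⊆ ⋃ n : ℕ, {ω | Mfun ω ≤ (n : ℝ)} := by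
      intro ω _
      obtain ⟨n, hn⟩ := exists_nat_ge (Mfun ω)
      exact Set.mem_iUnion.2 ⟨n, hn⟩
    have h1 : Psrc Set.univ ≤ 0 := by
      refine le_trans (measure_mono hcover) (le_of_eq ?_)
      exact measure_iUnion_null fun n => hall _
    simp [measure_univ] at h1
  have hSbdd : BddBelow S := by
    refine ⟨0, fun t ht => ?_⟩
    by_contra hneg
    push_neg at hneg
    have : {ω : ℕ → ℝ | Mfun ω ≤ t} = ∅ := by
      ext ω
      simp only [Set.mem_setOf_eq, Set.mem_empty_iff_false, iff_false, not_le]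
      exact lt_of_lt_of_le hneg (Mfun_nonneg ω)
    rw [hS, Set.mem_setOf_eq, this] at ht
    simp at ht
  set m : ℝ := sInf S with hm
  set A' : Set (ℕ → ℝ) := {ω | Mfun ω ≤ m} with hA'
  have hA'meas : MeasurableSet A' := measurable_Mfun measurableSet_Iic
  have haeA : ∀ᵐ ω ∂Psrc, ∀ q : ℚ, 0 < Psrc (Aq q) →
      ∃ᶠ n in atTop, shiftSeq^[n] ω ∈ Aq q := by
    rw [ae_all_iff]
    intro q
    by_cases hq : 0 < Psrc (Aq q)
    · exact (visit Psrc hErg (hAqmeas q) hq).mono fun ω h _ => h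
    · filter_upwards with ω h
      exact absurd h hq
  have haeB : ∀ᵐ ω ∂Psrc, ∀ q : ℚ, Psrc (Aq q) = 0 → ω ∉ Aq q := by
    rw [ae_all_iff]
    intro q
    by_cases hq : Psrc (Aq q) = 0
    · exact (measure_eq_zero_iff_ae_notMem.mp hq).mono fun ω h _ => h
    · filter_upwards with ω h
      exact absurd h hq
  have haeC : ∀ᵐ ω ∂Psrc, (0 < Psrc A' → ∃ᶠ n in atTop, shiftSeq^[n] ω ∈ A') ∧
      (Psrc A' = 0 → ω ∉ A') := by
    rcases (show 0 ≤ Psrc A' from zero_le).eq_or_lt with h0 | h0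
    · filter_upwards [measure_eq_zero_iff_ae_notMem.mp h0.symm] with ω h1
      exact ⟨fun hpos => absurd h0.symm hpos.ne', fun _ => h1⟩
    · filter_upwards [visit Psrc hErg hA'meas h0] with ω h1
      exact ⟨fun _ => h1, fun hz => absurd hz h0.ne'⟩
  filter_upwards [haeA, haeB, haeC] with ω h1 h2 h3
  by_cases hex : ∃ q : ℚ, 0 < Psrc (Aq q) ∧ (q : ℝ) ≤ Mfun ω
  · obtain ⟨q, hq1, hq2⟩ := hex
    exact (h1 q hq1).mono fun n hn => le_trans hn hq2
  · push_neg at hex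
    have hm1 : Mfun ω ≤ m := by
      refine le_csInf hSne fun t ht => ?_
      by_contra hc
      push_neg at hc
      obtain ⟨q, hq1, hq2⟩ := exists_rat_btwn hc
      have hpos : 0 < Psrc (Aq q) := by
        refine lt_of_lt_of_le ht (measure_mono fun x hx => ?_)
        exact le_trans hx hq1.le
      have := hex q hpos
      linarith
    have hmem' : ω ∈ A' := hm1
    have hpos' : 0 < Psrc A' := by
      rcases eq_or_ne (Psrc A') 0 with h0 | h0
      · exact absurd hmem' (h3.2 h0)
      · exact zero_le.lt_of_ne (Ne.symm h0)
    have hge : m ≤ Mfun ω := by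
      by_contra hc
      push_neg at hc
      obtain ⟨q, hq1, hq2⟩ := exists_rat_btwn hc
      have h0 : Psrc (Aq q) = 0 := by
        by_contra hp
        have hqS : (q : ℝ) ∈ S := zero_le.lt_of_ne (Ne.symm hp)
        have := csInf_le hSbdd hqS
        linarith
      exact absurd hq1.le (h2 q h0)
    exact (h3.1 hpos').mono fun n hn => le_trans hn hge

lemma coboundary (Psrc : Measure (ℕ → ℝ)) [IsProbabilityMeasure Psrc]
    (hErg : Ergodic shiftSeq Psrc)
    (hInt : Integrable (fun u : ℕ → ℝ => u 0) Psrc)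
    (hMean : ∫ u, u 0 ∂Psrc = 0)
    (hB : ∀ᵐ ω ∂Psrc, ω ∈ Bset) :
    ∀ᵐ ω ∂Psrc, Mfun ω = ω 0 + Mfun (shiftSeq ω) := by
  have hT : MeasurePreserving shiftSeq Psrc Psrc := hErg.toMeasurePreserving
  have hu0 : Integrable (fun ω : ℕ → ℝ => |ω 0|) Psrc := hInt.abs
  set G : ℕ → (ℕ → ℝ) → ℝ := fun c ω => min (Mfun ω) c with hG
  have hGmeas : ∀ c, Measurable (G c) := fun c => measurable_Mfun.min measurable_const
  have hGint : ∀ c, Integrable (G c) Psrc := by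
    intro c
    refine Integrable.mono' (integrable_const (c : ℝ)) (hGmeas c).aestronglyMeasurable
      (Filter.Eventually.of_forall fun ω => ?_)
    rw [Real.norm_eq_abs, abs_of_nonneg (le_min (Mfun_nonneg ω) (Nat.cast_nonneg c))]
    exact min_le_right _ _
  have hGTint : ∀ c, Integrable (fun ω => G c (shiftSeq ω)) Psrc := fun c =>
    (hT.integrable_comp (hGmeas c).aestronglyMeasurable).2 (hGint c)
  have hGint_eq : ∀ c, ∫ ω, G c (shiftSeq ω) ∂Psrc = ∫ ω, G c ω ∂Psrc := by
    intro c
    calc ∫ ω, G c (shiftSeq ω) ∂Psrc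
        = ∫ x, G c x ∂(Psrc.map shiftSeq) :=
          (integral_map hT.aemeasurable (hGmeas c).aestronglyMeasurable).symm
      _ = ∫ x, G c x ∂Psrc := by rw [hT.map_eq]
  set ψ : ℕ → (ℕ → ℝ) → ℝ := fun c ω => G c ω - G c (shiftSeq ω) - ω 0 + |ω 0| with hψ
  have hψmeas : ∀ c, Measurable (ψ c) := fun c =>
    (((hGmeas c).sub ((hGmeas c).comp measurable_shiftSeq)).sub
      (measurable_pi_apply 0)).add (measurable_pi_apply 0).abs
  have hψint : ∀ c, Integrable (ψ c) Psrc := fun c =>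
    (((hGint c).sub (hGTint c)).sub hInt).add hu0
  have hψval : ∀ c, ∫ ω, ψ c ω ∂Psrc = ∫ ω, |ω 0| ∂Psrc := by
    intro c
    have i2 : Integrable (fun ω => G c ω - G c (shiftSeq ω)) Psrc :=
      (hGint c).sub (hGTint c)
    have i1 : Integrable (fun ω => G c ω - G c (shiftSeq ω) - ω 0) Psrc :=
      i2.sub hInt
    show ∫ ω, (G c ω - G c (shiftSeq ω) - ω 0) + |ω 0| ∂Psrc = _
    rw [integral_add i1 hu0, integral_sub i2 hInt,
      integral_sub (hGint c) (hGTint c), hGint_eq, hMean]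
    ring
  have hdiff : ∀ᵐ ω ∂Psrc, ω 0 ≤ Mfun ω - Mfun (shiftSeq ω) := by
    filter_upwards [hB] with ω h
    have h1 := Mfun_rec h
    have h2 := le_max_right (0 : ℝ) (ω 0 + Mfun (shiftSeq ω))
    linarith
  have hψnn : ∀ c, 0 ≤ᵐ[Psrc] ψ c := by
    intro c
    filter_upwards [hdiff] with ω h
    have key : min (Mfun ω - Mfun (shiftSeq ω)) 0 ≤ G c ω - G c (shiftSeq ω) :=
      aux_min _ _ _
    have h2 : min (ω 0) 0 ≤ min (Mfun ω - Mfun (shiftSeq ω)) 0 :=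
      min_le_min h le_rfl
    have h6 := le_trans h2 key
    show (0:ℝ) ≤ G c ω - G c (shiftSeq ω) - ω 0 + |ω 0|
    rcases le_total (ω 0) 0 with h5 | h5
    · rw [min_eq_left h5] at h6
      rw [abs_of_nonpos h5]
      linarith
    · rw [min_eq_right h5] at h6
      rw [abs_of_nonneg h5]
      linarith
  have hlim : ∀ᵐ ω ∂Psrc, Filter.Tendsto (fun c => ψ c ω) atTop
      (nhds (Mfun ω - Mfun (shiftSeq ω) - ω 0 + |ω 0|)) := by
    filter_upwards with ω
    have h1 : ∀ᶠ c : ℕ in atTop, ψ c ω = Mfun ω - Mfun (shiftSeq ω) - ω 0 + |ω 0| := by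
      obtain ⟨N, hN⟩ := exists_nat_ge (max (Mfun ω) (Mfun (shiftSeq ω)))
      refine Filter.eventually_atTop.2 ⟨N, fun c hc => ?_⟩
      have hc1 : Mfun ω ≤ (c : ℝ) :=
        le_trans (le_trans (le_max_left _ _) hN) (Nat.cast_le.2 hc)
      have hc2 : Mfun (shiftSeq ω) ≤ (c : ℝ) :=
        le_trans (le_trans (le_max_right _ _) hN) (Nat.cast_le.2 hc)
      show G c ω - G c (shiftSeq ω) - ω 0 + |ω 0| = _
      rw [hG]
      simp only [min_eq_left hc1, min_eq_left hc2]
    exact Filter.Tendsto.congr' (h1.mono fun c hc => hc.symm) tendsto_const_nhds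
  have hfatou := lintegral_liminf_le
    (μ := Psrc) (u := (atTop : Filter ℕ)) (f := fun c ω => ENNReal.ofReal (ψ c ω))
    (fun c => (hψmeas c).ennreal_ofReal)
  have hconst : ∀ c, ∫⁻ ω, ENNReal.ofReal (ψ c ω) ∂Psrc
      = ENNReal.ofReal (∫ ω, |ω 0| ∂Psrc) := by
    intro c
    rw [← ofReal_integral_eq_lintegral_ofReal (hψint c) (hψnn c), hψval c]
  have hliminf_eq : ∀ᵐ ω ∂Psrc, Filter.liminf (fun c => ENNReal.ofReal (ψ c ω)) atTop
      = ENNReal.ofReal (Mfun ω - Mfun (shiftSeq ω) - ω 0 + |ω 0|) :=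
    hlim.mono fun ω h => (ENNReal.tendsto_ofReal h).liminf_eq
  have hkey : ∫⁻ ω, ENNReal.ofReal (Mfun ω - Mfun (shiftSeq ω) - ω 0 + |ω 0|) ∂Psrc
      ≤ ENNReal.ofReal (∫ ω, |ω 0| ∂Psrc) := by
    rw [← lintegral_congr_ae hliminf_eq]
    refine le_trans hfatou ?_
    simp only [hconst]
    exact le_of_eq (Filter.liminf_const _)
  have hsplit : ∀ᵐ ω ∂Psrc, ENNReal.ofReal (Mfun ω - Mfun (shiftSeq ω) - ω 0 + |ω 0|)
      = ENNReal.ofReal (Mfun ω - Mfun (shiftSeq ω) - ω 0) + ENNReal.ofReal |ω 0| :=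
    hdiff.mono fun ω h => ENNReal.ofReal_add (by linarith) (abs_nonneg _)
  rw [lintegral_congr_ae hsplit] at hkey
  have hmeas0 : Measurable fun ω : ℕ → ℝ => Mfun ω - Mfun (shiftSeq ω) - ω 0 :=
    (measurable_Mfun.sub (measurable_Mfun.comp measurable_shiftSeq)).sub
      (measurable_pi_apply 0)
  rw [lintegral_add_left hmeas0.ennreal_ofReal] at hkey
  have habs : ∫⁻ ω, ENNReal.ofReal |ω 0| ∂Psrc = ENNReal.ofReal (∫ ω, |ω 0| ∂Psrc) :=
    (ofReal_integral_eq_lintegral_ofReal hu0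
      (Filter.Eventually.of_forall fun ω => abs_nonneg _)).symm
  rw [habs] at hkey
  have hfin : ENNReal.ofReal (∫ ω, |ω 0| ∂Psrc) ≠ ∞ := ENNReal.ofReal_ne_top
  have hzero : ∫⁻ ω, ENNReal.ofReal (Mfun ω - Mfun (shiftSeq ω) - ω 0) ∂Psrc = 0 := by
    have h1 : ∫⁻ ω, ENNReal.ofReal (Mfun ω - Mfun (shiftSeq ω) - ω 0) ∂Psrc
        + ENNReal.ofReal (∫ ω, |ω 0| ∂Psrc)
        ≤ 0 + ENNReal.ofReal (∫ ω, |ω 0| ∂Psrc) := by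
      rwa [zero_add]
    exact le_zero_iff.1 ((ENNReal.add_le_add_iff_right hfin).1 h1)
  have h0 : ∀ᵐ ω ∂Psrc, ENNReal.ofReal (Mfun ω - Mfun (shiftSeq ω) - ω 0) = 0 :=
    (lintegral_eq_zero_iff hmeas0.ennreal_ofReal).mp hzero
  filter_upwards [h0, hdiff] with ω h1 h2
  rw [ENNReal.ofReal_eq_zero] at h1
  linarith

lemma telescope (Psrc : Measure (ℕ → ℝ)) [IsProbabilityMeasure Psrc]
    (hErg : Ergodic shiftSeq Psrc)
    (hCob : ∀ᵐ ω ∂Psrc, Mfun ω = ω 0 + Mfun (shiftSeq ω)) :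
    ∀ᵐ ω ∂Psrc, ∀ n, Wsum n ω = Mfun ω - Mfun (shiftSeq^[n] ω) := by
  have hT : MeasurePreserving shiftSeq Psrc Psrc := hErg.toMeasurePreserving
  have hstep : ∀ᵐ ω ∂Psrc, ∀ k, Mfun (shiftSeq^[k] ω) = ω k + Mfun (shiftSeq^[k+1] ω) := by
    rw [ae_all_iff]
    intro k
    have h := (hT.iterate k).quasiMeasurePreserving.ae hCob
    filter_upwards [h] with ω h1
    rw [Function.iterate_succ_apply', h1, shiftSeq_iterate]
    norm_num
  filter_upwards [hstep] with ω hω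
  intro n
  induction n with
  | zero => simp [Wsum_zero]
  | succ n ih =>
    rw [Wsum_succ]
    have h1 := hω n
    rw [ih, h1]
    ring

lemma exists_sep (Psrc : Measure (ℕ → ℝ)) [IsProbabilityMeasure Psrc]
    (hErg : Ergodic shiftSeq Psrc) (hNe : 0 < Psrc {u | u 0 ≠ 0})
    (hCob : ∀ᵐ ω ∂Psrc, Mfun ω = ω 0 + Mfun (shiftSeq ω)) :
    ∃ q : ℚ, 0 < Psrc {ω | Mfun ω ≤ (q : ℝ)} ∧ 0 < Psrc {ω | (q : ℝ) < Mfun ω} := by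
  have hT : MeasurePreserving shiftSeq Psrc Psrc := hErg.toMeasurePreserving
  by_contra hcon
  push_neg at hcon
  have hdich : ∀ q : ℚ, Psrc {ω | Mfun ω ≤ (q : ℝ)} = 0 ∨
      Psrc {ω | Mfun ω ≤ (q : ℝ)} = 1 := by
    intro q
    rcases eq_or_ne (Psrc {ω | Mfun ω ≤ (q : ℝ)}) 0 with h | h
    · exact Or.inl h
    · right
      have hpos := zero_le.lt_of_ne (Ne.symm h)
      have h2 : Psrc {ω | (q : ℝ) < Mfun ω} = 0 := le_zero_iff.1 (hcon q hpos)
      have hms : MeasurableSet {ω : ℕ → ℝ | (q : ℝ) < Mfun ω} :=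
        measurable_Mfun measurableSet_Ioi
      have hc : {ω : ℕ → ℝ | Mfun ω ≤ (q : ℝ)} = {ω : ℕ → ℝ | (q : ℝ) < Mfun ω}ᶜ := by
        ext ω; simp [not_lt]
      rw [hc, measure_compl hms (measure_ne_top _ _), measure_univ, h2, tsub_zero]
  set S : Set ℚ := {q : ℚ | Psrc {ω | Mfun ω ≤ (q : ℝ)} = 1} with hS
  have hSne : S.Nonempty := by
    by_contra hemp
    have hall : ∀ q : ℚ, Psrc {ω | Mfun ω ≤ (q : ℝ)} = 0 := by
      intro q
      rcases hdich q with h | h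
      · exact h
      · exact (hemp ⟨q, h⟩).elim
    have hcover : (Set.univ : Set (ℕ → ℝ)) ⊆ ⋃ q : ℚ, {ω | Mfun ω ≤ (q : ℝ)} := by
      intro ω _
      obtain ⟨n, hn⟩ := exists_nat_ge (Mfun ω)
      refine Set.mem_iUnion.2 ⟨(n : ℚ), ?_⟩
      simpa using hn
    have h1 : Psrc Set.univ ≤ 0 := by
      refine le_trans (measure_mono hcover) (le_of_eq ?_)
      exact measure_iUnion_null fun q => hall q
    simp [measure_univ] at h1
  have himgne : ((fun q : ℚ => (q : ℝ)) '' S).Nonempty := hSne.image _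
  have hSbdd : BddBelow ((fun q : ℚ => (q : ℝ)) '' S) := by
    refine ⟨0, ?_⟩
    rintro x ⟨p, hp, rfl⟩
    by_contra hneg
    push_neg at hneg
    have hemp : {ω : ℕ → ℝ | Mfun ω ≤ (p : ℝ)} = ∅ := by
      ext ω
      simp only [Set.mem_setOf_eq, Set.mem_empty_iff_false, iff_false, not_le]
      exact lt_of_lt_of_le hneg (Mfun_nonneg ω)
    rw [hS, Set.mem_setOf_eq, hemp] at hp
    simp at hp
  set m : ℝ := sInf ((fun q : ℚ => (q : ℝ)) '' S) with hm
  have hlt : Psrc {ω | Mfun ω < m} = 0 := by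
    have hsub : {ω : ℕ → ℝ | Mfun ω < m} ⊆
        ⋃ q : ℚ, {ω : ℕ → ℝ | Mfun ω ≤ (q : ℝ) ∧ Psrc {x | Mfun x ≤ (q : ℝ)} = 0} := by
      intro ω hω
      have hω' : Mfun ω < m := hω
      obtain ⟨q, hq1, hq2⟩ := exists_rat_btwn hω'
      have hq0 : Psrc {x | Mfun x ≤ (q : ℝ)} = 0 := by
        rcases hdich q with h | h
        · exact h
        · exfalso
          have : m ≤ (q : ℝ) := csInf_le hSbdd ⟨q, h, rfl⟩
          linarith
      exact Set.mem_iUnion.2 ⟨q, hq1.le, hq0⟩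
    refine measure_mono_null hsub (measure_iUnion_null fun q => ?_)
    by_cases h0 : Psrc {x : ℕ → ℝ | Mfun x ≤ (q : ℝ)} = 0
    · refine measure_mono_null (fun ω hω => ?_) h0
      exact hω.1
    · have : {ω : ℕ → ℝ | Mfun ω ≤ (q : ℝ) ∧ Psrc {x | Mfun x ≤ (q : ℝ)} = 0} = ∅ := by
        ext ω
        simp only [Set.mem_setOf_eq, Set.mem_empty_iff_false, iff_false]
        exact fun h => h0 h.2
      rw [this]; simp
  have hgt : Psrc {ω | m < Mfun ω} = 0 := by
    have hsub : {ω : ℕ → ℝ | m < Mfun ω} ⊆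
        ⋃ q : ℚ, {ω : ℕ → ℝ | (q : ℝ) < Mfun ω ∧ Psrc {x | Mfun x ≤ (q : ℝ)} = 1} := by
      intro ω hω
      have hω' : m < Mfun ω := hω
      obtain ⟨x, ⟨p, hpS, rfl⟩, hx⟩ := exists_lt_of_csInf_lt himgne hω'
      exact Set.mem_iUnion.2 ⟨p, hx, hpS⟩
    refine measure_mono_null hsub (measure_iUnion_null fun q => ?_)
    by_cases h1 : Psrc {x : ℕ → ℝ | Mfun x ≤ (q : ℝ)} = 1
    · have hnull : Psrc {ω : ℕ → ℝ | (q : ℝ) < Mfun ω} = 0 := by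
        have hms : MeasurableSet {ω : ℕ → ℝ | Mfun ω ≤ (q : ℝ)} :=
          measurable_Mfun measurableSet_Iic
        have hc : {ω : ℕ → ℝ | (q : ℝ) < Mfun ω} = {ω : ℕ → ℝ | Mfun ω ≤ (q : ℝ)}ᶜ := by
          ext ω; simp [not_le]
        rw [hc, measure_compl hms (measure_ne_top _ _), measure_univ, h1, tsub_self]
      exact measure_mono_null (fun ω hω => hω.1) hnull
    · have : {ω : ℕ → ℝ | (q : ℝ) < Mfun ω ∧ Psrc {x | Mfun x ≤ (q : ℝ)} = 1} = ∅ := by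
        ext ω
        simp only [Set.mem_setOf_eq, Set.mem_empty_iff_false, iff_false]
        exact fun h => h1 h.2
      rw [this]; simp
  have hMm : ∀ᵐ ω ∂Psrc, Mfun ω = m := by
    filter_upwards [measure_eq_zero_iff_ae_notMem.mp hlt, measure_eq_zero_iff_ae_notMem.mp hgt]
      with ω hω1 hω2
    simp only [Set.mem_setOf_eq, not_lt] at hω1 hω2
    linarith
  have hMmT : ∀ᵐ ω ∂Psrc, Mfun (shiftSeq ω) = m :=
    hT.quasiMeasurePreserving.ae hMm
  have hz : ∀ᵐ ω ∂Psrc, ω 0 = 0 := by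
    filter_upwards [hCob, hMm, hMmT] with ω h1 h2 h3
    rw [h2, h3] at h1
    linarith
  have h0 : Psrc {u | u 0 ≠ 0} = 0 := by
    have := ae_iff.mp hz
    simpa using this
  exact absurd h0 hNe.ne'

end Stmt19Aux

open Stmt19Aux

/-- for a stationary ergodic real-valued process with mean zero
that is not identically zero, the random walk `W_n = ∑_{k=1}^n U_k` satisfies
`P(W_n > 0 i.o.) > 0` and `P(W_n ≥ 0 i.o.) = 1`. -/
theorem stmt19 (Psrc : Measure (ℕ → ℝ)) [IsProbabilityMeasure Psrc]
    (hErg : Ergodic shiftSeq Psrc)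
    (hInt : Integrable (fun u : ℕ → ℝ => u 0) Psrc)
    (hMean : ∫ u, u 0 ∂Psrc = 0)
    (hNe : 0 < Psrc {u | u 0 ≠ 0}) :
    0 < Psrc {u | ∃ᶠ n in atTop, 0 < ∑ k ∈ Finset.range n, u k} ∧
    Psrc {u | ∃ᶠ n in atTop, 0 ≤ ∑ k ∈ Finset.range n, u k} = 1 := by
  have hsum1 : {u : ℕ → ℝ | ∃ᶠ n in atTop, 0 < ∑ k ∈ Finset.range n, u k}
      = {u : ℕ → ℝ | ∃ᶠ n in atTop, 0 < Wsum n u} := rfl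
  have hsum2 : {u : ℕ → ℝ | ∃ᶠ n in atTop, 0 ≤ ∑ k ∈ Finset.range n, u k}
      = {u : ℕ → ℝ | ∃ᶠ n in atTop, 0 ≤ Wsum n u} := rfl
  rw [hsum1, hsum2]
  rcases hErg.ae_empty_or_univ measurableSet_Bset Bset_preimage with hB | hB
  · -- a.e. the walk is unbounded above
    have hB0 : Psrc Bset = 0 := by
      rw [measure_congr hB]; simp
    have hnm : ∀ᵐ ω ∂Psrc, ω ∉ Bset := measure_eq_zero_iff_ae_notMem.mp hB0
    have hfreq : ∀ᵐ ω ∂Psrc, ∃ᶠ n in atTop, 0 < Wsum n ω := by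
      filter_upwards [hnm] with ω h
      rw [Filter.frequently_atTop]
      intro N
      rw [Bset, Set.mem_setOf_eq, not_bddAbove_iff] at h
      set c : ℝ := max 0 ((Finset.range (N + 1)).sup'
        (Finset.nonempty_range_iff.2 (Nat.succ_ne_zero N)) fun mm => Wsum mm ω) with hc
      obtain ⟨x, ⟨n, rfl⟩, hx⟩ := h c
      have hx' : c < Wsum n ω := hx
      refine ⟨n, ?_, ?_⟩
      · by_contra hn
        push_neg at hn
        have hmem : n ∈ Finset.range (N + 1) := Finset.mem_range.2 (by omega)
        have : Wsum n ω ≤ c := le_trans (Finset.le_sup' (fun mm => Wsum mm ω) hmem)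
          (le_max_right _ _)
        linarith
      · have : (0 : ℝ) ≤ c := le_max_left _ _
        linarith
    constructor
    · rw [prob_eq_one_of_ae Psrc
        (S := {u : ℕ → ℝ | ∃ᶠ n in atTop, 0 < Wsum n u}) hfreq]
      norm_num
    · exact prob_eq_one_of_ae Psrc
        (S := {u : ℕ → ℝ | ∃ᶠ n in atTop, 0 ≤ Wsum n u})
        (hfreq.mono fun ω h => h.mono fun n hn => hn.le)
  · have hBmem : ∀ᵐ ω ∂Psrc, ω ∈ Bset := by
      have h2 : Psrc Bsetᶜ = 0 := ae_eq_univ.mp hB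
      filter_upwards [measure_eq_zero_iff_ae_notMem.mp h2] with ω h
      simpa using h
    have hCob := coboundary Psrc hErg hInt hMean hBmem
    have hTel := telescope Psrc hErg hCob
    obtain ⟨q, hq1, hq2⟩ := exists_sep Psrc hErg hNe hCob
    have hAmeas : MeasurableSet {ω : ℕ → ℝ | Mfun ω ≤ (q : ℝ)} :=
      measurable_Mfun measurableSet_Iic
    have hvisit := visit Psrc hErg hAmeas hq1
    have hstar := star Psrc hErg
    constructor
    · have hsub : Psrc {ω : ℕ → ℝ | (q : ℝ) < Mfun ω}
          ≤ Psrc {u : ℕ → ℝ | ∃ᶠ n in atTop, 0 < Wsum n u} := by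
        refine measure_mono_ae ?_
        filter_upwards [hTel, hvisit] with ω h1 h2
        intro hω
        have hω' : (q : ℝ) < Mfun ω := hω
        refine h2.mono fun n hn => ?_
        have hn' : Mfun (shiftSeq^[n] ω) ≤ (q : ℝ) := hn
        show 0 < Wsum n ω
        rw [h1 n]
        linarith
      exact lt_of_lt_of_le hq2 hsub
    · refine prob_eq_one_of_ae Psrc
        (S := {u : ℕ → ℝ | ∃ᶠ n in atTop, 0 ≤ Wsum n u}) ?_
      filter_upwards [hTel, hstar] with ω h1 h2
      refine h2.mono fun n hn => ?_
      show 0 ≤ Wsum n ω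
      rw [h1 n]
      linarith


end
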